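/- (Faà di Bruno's formula via Bell polynomials) Let s₁ and s₂ be real functions that are i-times continuously differentiable on suitable domains. Then the i-th derivative of the composition satisfies dⁱ/dtⁱ [s₁(s₂(t))] = ∑_{j=1}^{i} s₁^{(j)}(s₂(t)) · B_{i,j}(s₂^{(1)}(t), …, s₂^{(i−j+1)}(t)), where B_{i,j} are the partial Bell polynomials. -/

import Mathlib

open Set Filter Topology

/-- Partial Bell polynomials B_{n,m}(s₁,…,s_{n−m+1}), via the recurrence
B_{n,m} = ∑_{i=1}^{n−m+1} C(n−1,i−1)·s_i·B_{n−i,m−1}, B_{0,0}=1,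
B_{n,0}=0 (n≥1), B_{0,m}=0 (m≥1).  The argument vector is given as a
function `s : ℕ → ℝ` (indices starting at 1). -/
def bellPoly : ℕ → ℕ → (ℕ → ℝ) → ℝ
  | 0, 0, _ => 1
  | _ + 1, 0, _ => 0
  | 0, _ + 1, _ => 0
  | n + 1, m + 1, s =>
      ∑ j ∈ Finset.range (n + 1), (n.choose j : ℝ) * s (j + 1) * bellPoly (n - j) m s

lemma bellPoly_succ_succ (n m : ℕ) (s : ℕ → ℝ) :
    bellPoly (n + 1) (m + 1) s
      = ∑ j ∈ Finset.range (n + 1), (n.choose j : ℝ) * s (j + 1) * bellPoly (n - j) m s := by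
  rfl

lemma bellPoly_pos_zero (n : ℕ) (s : ℕ → ℝ) (hn : n ≠ 0) : bellPoly n 0 s = 0 := by
  cases n with
  | zero => exact absurd rfl hn
  | succ n => rfl

lemma bellPoly_eq_zero (n m : ℕ) (s : ℕ → ℝ) (h : n < m) : bellPoly n m s = 0 := by
  induction n using Nat.strong_induction_on generalizing m with
  | _ n ih =>
    match n, m, h with
    | 0, m + 1, _ => rfl
    | n + 1, m + 1, h =>
      rw [bellPoly_succ_succ]
      apply Finset.sum_eq_zero
      intro j hj
      rw [ih (n - j) (by omega) m (by omega), mul_zero]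

lemma bellPoly_one (n : ℕ) (s : ℕ → ℝ) : bellPoly (n + 1) 1 s = s (n + 1) := by
  rw [bellPoly_succ_succ, Finset.sum_eq_single n]
  · simp [bellPoly]
  · intro j hj hjn
    rw [bellPoly_pos_zero (n - j) s (by simp at hj; omega), mul_zero]
  · simp
lemma bellPoly_diag (n : ℕ) (s : ℕ → ℝ) :
    bellPoly (n + 1) (n + 1) s = s 1 * bellPoly n n s := by
  rw [bellPoly_succ_succ, Finset.sum_eq_single 0]
  · simp
  · intro j hj hj0
    rw [bellPoly_eq_zero (n - j) n s (by simp at hj; omega), mul_zero]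
  · simp

lemma bell_step (n q : ℕ) (s : ℕ → ℝ) :
    (∑ i ∈ Finset.range (n + 1), (n.choose i : ℝ) * s (i + 2) * bellPoly (n - i) q s)
      + ∑ i ∈ Finset.range (n + 1), (n.choose i : ℝ) * s (i + 1) * bellPoly (n + 1 - i) q s
    = bellPoly (n + 2) (q + 1) s := by
  rw [show n + 2 = (n + 1) + 1 from rfl, bellPoly_succ_succ, Finset.sum_range_succ' _ (n + 1)]
  have h1 : ∀ i ∈ Finset.range (n + 1),
      ((n + 1).choose (i + 1) : ℝ) * s (i + 1 + 1) * bellPoly (n + 1 - (i + 1)) q s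
        = (n.choose i : ℝ) * s (i + 2) * bellPoly (n - i) q s
          + (n.choose (i + 1) : ℝ) * s (i + 2) * bellPoly (n - i) q s := by
    intro i _
    have : (n + 1).choose (i + 1) = n.choose i + n.choose (i + 1) := Nat.choose_succ_succ n i
    rw [this]
    have h2 : n + 1 - (i + 1) = n - i := by omega
    rw [h2]
    push_cast
    ring
  rw [Finset.sum_congr rfl h1, Finset.sum_add_distrib]
  have h3 : ∑ i ∈ Finset.range (n + 1), (n.choose i : ℝ) * s (i + 1) * bellPoly (n + 1 - i) q s
      = ∑ i ∈ Finset.range n, (n.choose (i + 1) : ℝ) * s (i + 2) * bellPoly (n - i) q s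
        + (n.choose 0 : ℝ) * s 1 * bellPoly (n + 1) q s := by
    rw [Finset.sum_range_succ' _ n]
    congr 1
    apply Finset.sum_congr rfl
    intro i hi
    have : n + 1 - (i + 1) = n - i := by omega
    rw [this]
  have h4 : ∑ i ∈ Finset.range (n + 1), (n.choose (i + 1) : ℝ) * s (i + 2) * bellPoly (n - i) q s
      = ∑ i ∈ Finset.range n, (n.choose (i + 1) : ℝ) * s (i + 2) * bellPoly (n - i) q s := by
    rw [Finset.sum_range_succ, Nat.choose_succ_self]
    simp
  rw [h3, h4]
  simp [Nat.choose_zero_right]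
  ring

lemma bell_hasDerivAt (g : ℝ → ℝ) :
    ∀ n, (∀ k, k ≤ n → ∀ x, HasDerivAt (iteratedDeriv k g) (iteratedDeriv (k + 1) g x) x) →
    ∀ m t, HasDerivAt (fun x => bellPoly n (m + 1) fun k => iteratedDeriv k g x)
      (bellPoly (n + 1) (m + 1) (fun k => iteratedDeriv k g t)
        - iteratedDeriv 1 g t * bellPoly n m (fun k => iteratedDeriv k g t)) t := by
  intro n
  induction n using Nat.strong_induction_on with
  | _ n ih =>
    intro h m t
    match n, m with
    | 0, m =>
      have : (fun x => bellPoly 0 (m + 1) fun k => iteratedDeriv k g x) = fun _ => (0 : ℝ) := by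
        funext x; rfl
      rw [this]
      refine (hasDerivAt_const t (0 : ℝ)).congr_deriv ?_
      symm
      rw [bellPoly_succ_succ]
      simp
    | n + 1, 0 =>
      have hf : (fun x => bellPoly (n + 1) 1 fun k => iteratedDeriv k g x)
          = iteratedDeriv (n + 1) g := by
        funext x; rw [bellPoly_one]
      rw [hf]
      have hv : bellPoly (n + 2) 1 (fun k => iteratedDeriv k g t)
          - iteratedDeriv 1 g t * bellPoly (n + 1) 0 (fun k => iteratedDeriv k g t)
          = iteratedDeriv (n + 2) g t := by
        rw [show n + 2 = (n + 1) + 1 from rfl, bellPoly_one,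
          bellPoly_pos_zero _ _ (Nat.succ_ne_zero n)]
        ring
      rw [hv]
      exact h (n + 1) le_rfl t
    | n + 1, q + 1 =>
      have hf : (fun x => bellPoly (n + 1) (q + 2) fun k => iteratedDeriv k g x)
          = fun x => ∑ i ∈ Finset.range (n + 1),
              (n.choose i : ℝ) * (iteratedDeriv (i + 1) g x
                * bellPoly (n - i) (q + 1) (fun k => iteratedDeriv k g x)) := by
        funext x; rw [bellPoly_succ_succ]
        exact Finset.sum_congr rfl fun i _ => mul_assoc _ _ _
      rw [hf]
      have hterm : ∀ i ∈ Finset.range (n + 1),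
          HasDerivAt (fun x => (n.choose i : ℝ) * (iteratedDeriv (i + 1) g x
              * bellPoly (n - i) (q + 1) (fun k => iteratedDeriv k g x)))
            ((n.choose i : ℝ) * (iteratedDeriv (i + 2) g t
                * bellPoly (n - i) (q + 1) (fun k => iteratedDeriv k g t)
              + iteratedDeriv (i + 1) g t
                * (bellPoly (n - i + 1) (q + 1) (fun k => iteratedDeriv k g t)
                  - iteratedDeriv 1 g t * bellPoly (n - i) q (fun k => iteratedDeriv k g t)))) t := by
        intro i hi
        simp only [Finset.mem_range] at hi
        have h1 : HasDerivAt (fun x => iteratedDeriv (i + 1) g x) (iteratedDeriv (i + 2) g t) t :=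
          h (i + 1) (by omega) t
        have h2 := ih (n - i) (by omega) (fun k hk x => h k (by omega) x) q t
        exact (h1.mul h2).const_mul (n.choose i : ℝ)
      have hsum := HasDerivAt.fun_sum hterm
      refine hsum.congr_deriv ?_
      symm
      rw [← bell_step n (q + 1) (fun k => iteratedDeriv k g t), bellPoly_succ_succ n q]
      rw [Finset.mul_sum, ← Finset.sum_add_distrib, ← Finset.sum_sub_distrib]
      apply Finset.sum_congr rfl
      intro i hi
      simp only [Finset.mem_range] at hi
      have : n + 1 - i = n - i + 1 := by omega
      rw [this]
      ring

/-- Faà di Bruno's formula via Bell polynomials: for i-times continuously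
differentiable s₁, s₂ and i ≥ 1,
dⁱ/dtⁱ s₁(s₂(t)) = ∑_{j=1}^{i} s₁^{(j)}(s₂(t))·B_{i,j}(s₂', …, s₂^{(i−j+1)}). -/
theorem stmt_11 (i : ℕ) (hi : 1 ≤ i) (s₁ s₂ : ℝ → ℝ)
    (hs₁ : ContDiff ℝ i s₁) (hs₂ : ContDiff ℝ i s₂) (t : ℝ) :
    iteratedDeriv i (fun x => s₁ (s₂ x)) t =
      ∑ j ∈ Finset.Icc 1 i,
        iteratedDeriv j s₁ (s₂ t) *
          bellPoly i j (fun k => iteratedDeriv k s₂ t) := by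
  have hD₁ : ∀ j, j < i → ∀ x, HasDerivAt (iteratedDeriv j s₁) (iteratedDeriv (j + 1) s₁ x) x := by
    intro j hj x
    have hd := ((hs₁.differentiable_iteratedDeriv j (by exact_mod_cast hj)) x).hasDerivAt
    rwa [← iteratedDeriv_succ] at hd
  have hD₂ : ∀ j, j < i → ∀ x, HasDerivAt (iteratedDeriv j s₂) (iteratedDeriv (j + 1) s₂ x) x := by
    intro j hj x
    have hd := ((hs₂.differentiable_iteratedDeriv j (by exact_mod_cast hj)) x).hasDerivAt
    rwa [← iteratedDeriv_succ] at hd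
  suffices H : ∀ k, 1 ≤ k → k ≤ i → ∀ t, iteratedDeriv k (fun x => s₁ (s₂ x)) t =
      ∑ j ∈ Finset.Icc 1 k, iteratedDeriv j s₁ (s₂ t)
        * bellPoly k j (fun l => iteratedDeriv l s₂ t) from H i hi le_rfl t
  intro k
  induction k with
  | zero => omega
  | succ k ihk =>
    intro _ hki t
    rcases Nat.eq_zero_or_pos k with hk0 | hk1
    · subst hk0
      have h1 := hD₁ 0 (by omega) (s₂ t)
      have h2 := hD₂ 0 (by omega) t
      rw [iteratedDeriv_zero] at h1 h2
      have hc : HasDerivAt (fun x => s₁ (s₂ x))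
          (iteratedDeriv 1 s₁ (s₂ t) * iteratedDeriv 1 s₂ t) t := h1.comp t h2
      rw [iteratedDeriv_one, hc.deriv]
      rw [show Finset.Icc 1 1 = {1} from rfl, Finset.sum_singleton, bellPoly_one 0]
    · have hfun : iteratedDeriv k (fun x => s₁ (s₂ x)) = fun x => ∑ j ∈ Finset.Icc 1 k,
          iteratedDeriv j s₁ (s₂ x) * bellPoly k j (fun l => iteratedDeriv l s₂ x) :=
        funext fun x => ihk hk1 (by omega) x
      rw [iteratedDeriv_succ, hfun]
      have hterm : ∀ j ∈ Finset.Icc 1 k, HasDerivAt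
          (fun x => iteratedDeriv j s₁ (s₂ x) * bellPoly k j (fun l => iteratedDeriv l s₂ x))
          (iteratedDeriv (j + 1) s₁ (s₂ t) * iteratedDeriv 1 s₂ t
              * bellPoly k j (fun l => iteratedDeriv l s₂ t)
            + iteratedDeriv j s₁ (s₂ t) * (bellPoly (k + 1) j (fun l => iteratedDeriv l s₂ t)
              - iteratedDeriv 1 s₂ t * bellPoly k (j - 1) (fun l => iteratedDeriv l s₂ t))) t := by
        intro j hj
        simp only [Finset.mem_Icc] at hj
        obtain ⟨m, rfl⟩ : ∃ m, j = m + 1 := ⟨j - 1, by omega⟩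
        have hb := hD₂ 0 (by omega) t
        rw [iteratedDeriv_zero] at hb
        have h1 : HasDerivAt (fun x => iteratedDeriv (m + 1) s₁ (s₂ x))
            (iteratedDeriv (m + 1 + 1) s₁ (s₂ t) * iteratedDeriv 1 s₂ t) t :=
          (hD₁ (m + 1) (by omega) (s₂ t)).comp t hb
        have h2 := bell_hasDerivAt s₂ k (fun l hl x => hD₂ l (by omega) x) m t
        simpa only [Nat.add_sub_cancel] using h1.fun_mul h2
      rw [(HasDerivAt.fun_sum hterm).deriv]
      -- now a pure algebraic identity about sums
      set s : ℕ → ℝ := fun l => iteratedDeriv l s₂ t with hsdef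
      set f : ℕ → ℝ := fun j => iteratedDeriv j s₁ (s₂ t) with hfdef
      have hIcc : ∀ (F : ℕ → ℝ) (K : ℕ),
          ∑ j ∈ Finset.Icc 1 K, F j = ∑ l ∈ Finset.range K, F (l + 1) := by
        intro F K
        rw [← Finset.Ico_add_one_right_eq_Icc, Finset.sum_Ico_eq_sum_range]
        simp only [Nat.add_sub_cancel]
        exact Finset.sum_congr rfl fun l _ => by rw [add_comm]
      rw [hIcc, hIcc]
      obtain ⟨k', rfl⟩ : ∃ k', k = k' + 1 := ⟨k - 1, by omega⟩
      have expand : ∀ l ∈ Finset.range (k' + 1),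
          f (l + 1 + 1) * s 1 * bellPoly (k' + 1) (l + 1) s
            + f (l + 1) * (bellPoly (k' + 2) (l + 1) s - s 1 * bellPoly (k' + 1) (l + 1 - 1) s)
          = (f (l + 2) * s 1 * bellPoly (k' + 1) (l + 1) s
              + f (l + 1) * bellPoly (k' + 2) (l + 1) s)
            - f (l + 1) * s 1 * bellPoly (k' + 1) l s := by
        intro l _
        simp only [Nat.add_sub_cancel]
        ring
      rw [Finset.sum_congr rfl expand, Finset.sum_sub_distrib, Finset.sum_add_distrib]
      have hC : ∑ l ∈ Finset.range (k' + 1), f (l + 1) * s 1 * bellPoly (k' + 1) l s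
          = ∑ l ∈ Finset.range k', f (l + 2) * s 1 * bellPoly (k' + 1) (l + 1) s := by
        rw [Finset.sum_range_succ' (fun l => f (l + 1) * s 1 * bellPoly (k' + 1) l s) k']
        rw [bellPoly_pos_zero (k' + 1) s (Nat.succ_ne_zero k')]
        simp
      have hA : ∑ l ∈ Finset.range (k' + 1), f (l + 2) * s 1 * bellPoly (k' + 1) (l + 1) s
          = ∑ l ∈ Finset.range k', f (l + 2) * s 1 * bellPoly (k' + 1) (l + 1) s
            + f (k' + 2) * s 1 * bellPoly (k' + 1) (k' + 1) s :=
        Finset.sum_range_succ _ k'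
      have hR : ∑ l ∈ Finset.range (k' + 1 + 1), f (l + 1) * bellPoly (k' + 2) (l + 1) s
          = ∑ l ∈ Finset.range (k' + 1), f (l + 1) * bellPoly (k' + 2) (l + 1) s
            + f (k' + 2) * bellPoly (k' + 2) (k' + 2) s :=
        Finset.sum_range_succ _ (k' + 1)
      rw [hC, hA, hR, show k' + 2 = (k' + 1) + 1 from rfl, bellPoly_diag (k' + 1) s]
      ring
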